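/- If B is a locally ordered Cartesian bicategory, then the bicategory Mod(B) of monads and modules in B is a locally ordered Cartesian bicategory. -/

import Mathlib

universe u v

/-- A locally ordered bicategory: a bicategory whose hom-categories are
partially ordered sets (hence composition is strictly associative and unital,
since invertible 2-cells are equalities). -/
structure LoBicat : Type (max (u + 1) (v + 1)) where
  Obj : Type u
  Hom : Obj → Obj → Type v
  le : ∀ {A B : Obj}, Hom A B → Hom A B → Prop
  le_refl : ∀ {A B : Obj} (f : Hom A B), le f f
  le_trans : ∀ {A B : Obj} {f g h : Hom A B}, le f g → le g h → le f h
  le_antisymm : ∀ {A B : Obj} {f g : Hom A B}, le f g → le g f → f = g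
  idH : ∀ A : Obj, Hom A A
  comp : ∀ {A B C : Obj}, Hom A B → Hom B C → Hom A C
  comp_le : ∀ {A B C : Obj} {f f' : Hom A B} {g g' : Hom B C},
      le f f' → le g g' → le (comp f g) (comp f' g')
  id_comp : ∀ {A B : Obj} (f : Hom A B), comp (idH A) f = f
  comp_id : ∀ {A B : Obj} (f : Hom A B), comp f (idH B) = f
  comp_assoc : ∀ {A B C D : Obj} (f : Hom A B) (g : Hom B C) (h : Hom C D),
      comp (comp f g) h = comp f (comp g h)

namespace LoBicat

/-- A map: a 1-cell with a right adjoint. -/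
def IsMap (B : LoBicat) {A X : B.Obj} (f : B.Hom A X) : Prop :=
  ∃ g : B.Hom X A, B.le (B.idH A) (B.comp f g) ∧ B.le (B.comp g f) (B.idH X)

/-- A Cartesian structure on a locally ordered bicategory, after Carboni–Walters:
a tensor product (pseudofunctor with unit object `I` and coherent natural
isomorphisms ρ, λ, γ, α), a cocommutative comonoid structure `(d, t)` on each
object such that every arrow is a colax comonoid homomorphism, and `d`, `t`
have right adjoints. -/
structure CartStr (B : LoBicat) where
  tens : B.Obj → B.Obj → B.Obj
  tensH : ∀ {A A' X Y : B.Obj}, B.Hom A X → B.Hom A' Y → B.Hom (tens A A') (tens X Y)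
  tensH_le : ∀ {A A' X Y : B.Obj} {f f' : B.Hom A X} {g g' : B.Hom A' Y},
      B.le f f' → B.le g g' → B.le (tensH f g) (tensH f' g')
  tensH_id : ∀ A A' : B.Obj, tensH (B.idH A) (B.idH A') = B.idH (tens A A')
  tensH_comp :
    ∀ {A₁ A₂ A₃ X₁ X₂ X₃ : B.Obj} (f₁ : B.Hom A₁ A₂) (f₂ : B.Hom A₂ A₃)
      (g₁ : B.Hom X₁ X₂) (g₂ : B.Hom X₂ X₃),
      tensH (B.comp f₁ f₂) (B.comp g₁ g₂) = B.comp (tensH f₁ g₁) (tensH f₂ g₂)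
  I : B.Obj
  rho : ∀ X : B.Obj, B.Hom X (tens X I)
  rhoInv : ∀ X : B.Obj, B.Hom (tens X I) X
  rho_inv_left : ∀ X, B.comp (rho X) (rhoInv X) = B.idH X
  rho_inv_right : ∀ X, B.comp (rhoInv X) (rho X) = B.idH (tens X I)
  rho_nat : ∀ {X Y : B.Obj} (f : B.Hom X Y),
      B.comp f (rho Y) = B.comp (rho X) (tensH f (B.idH I))
  lam : ∀ X : B.Obj, B.Hom X (tens I X)
  lamInv : ∀ X : B.Obj, B.Hom (tens I X) X
  lam_inv_left : ∀ X, B.comp (lam X) (lamInv X) = B.idH X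
  lam_inv_right : ∀ X, B.comp (lamInv X) (lam X) = B.idH (tens I X)
  lam_nat : ∀ {X Y : B.Obj} (f : B.Hom X Y),
      B.comp f (lam Y) = B.comp (lam X) (tensH (B.idH I) f)
  gam : ∀ X Y : B.Obj, B.Hom (tens X Y) (tens Y X)
  gam_nat : ∀ {X Y X' Y' : B.Obj} (f : B.Hom X X') (g : B.Hom Y Y'),
      B.comp (tensH f g) (gam X' Y') = B.comp (gam X Y) (tensH g f)
  alp : ∀ X Y Z : B.Obj, B.Hom (tens (tens X Y) Z) (tens X (tens Y Z))
  alpInv : ∀ X Y Z : B.Obj, B.Hom (tens X (tens Y Z)) (tens (tens X Y) Z)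
  alp_inv_left : ∀ X Y Z, B.comp (alp X Y Z) (alpInv X Y Z) = B.idH _
  alp_inv_right : ∀ X Y Z, B.comp (alpInv X Y Z) (alp X Y Z) = B.idH _
  alp_nat : ∀ {X Y Z X' Y' Z' : B.Obj} (f : B.Hom X X') (g : B.Hom Y Y') (h : B.Hom Z Z'),
      B.comp (tensH (tensH f g) h) (alp X' Y' Z') = B.comp (alp X Y Z) (tensH f (tensH g h))
  pentagon : ∀ X Y Z W : B.Obj,
      B.comp (alp (tens X Y) Z W) (alp X Y (tens Z W)) =
        B.comp (tensH (alp X Y Z) (B.idH W))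
          (B.comp (alp X (tens Y Z) W) (tensH (B.idH X) (alp Y Z W)))
  triangle : ∀ X Y : B.Obj,
      B.comp (tensH (rho X) (B.idH Y)) (alp X I Y) = tensH (B.idH X) (lam Y)
  hexagon : ∀ X Y Z : B.Obj,
      B.comp (B.comp (alp X Y Z) (gam X (tens Y Z))) (alp Y Z X) =
        B.comp (tensH (gam X Y) (B.idH Z)) (B.comp (alp Y X Z) (tensH (B.idH Y) (gam X Z)))
  symm : ∀ X Y : B.Obj, B.comp (gam X Y) (gam Y X) = B.idH (tens X Y)
  d : ∀ X : B.Obj, B.Hom X (tens X X)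
  t : ∀ X : B.Obj, B.Hom X I
  coassoc : ∀ X : B.Obj,
      B.comp (B.comp (d X) (tensH (d X) (B.idH X))) (alp X X X) =
        B.comp (d X) (tensH (B.idH X) (d X))
  counit_rho : ∀ X, B.comp (d X) (tensH (B.idH X) (t X)) = rho X
  counit_lam : ∀ X, B.comp (d X) (tensH (t X) (B.idH X)) = lam X
  cocomm : ∀ X, B.comp (d X) (gam X X) = d X
  colax_d : ∀ {X Y : B.Obj} (f : B.Hom X Y),
      B.le (B.comp f (d Y)) (B.comp (d X) (tensH f f))
  colax_t : ∀ {X Y : B.Obj} (f : B.Hom X Y), B.le (B.comp f (t Y)) (t X)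
  d_map : ∀ X : B.Obj, B.IsMap (d X)
  t_map : ∀ X : B.Obj, B.IsMap (t X)

/-- The Karoubi bicategory of a locally ordered bicategory: objects are
idempotent 1-cells, 1-cells are modules between idempotents, 2-cells are
inequalities. -/
def Kar (B : LoBicat) : LoBicat where
  Obj := Σ A : B.Obj, { a : B.Hom A A // B.comp a a = a }
  Hom X Y := { R : B.Hom X.1 Y.1 // B.comp X.2.1 R = R ∧ B.comp R Y.2.1 = R }
  le R S := B.le R.1 S.1
  le_refl _ := B.le_refl _
  le_trans h1 h2 := B.le_trans h1 h2
  le_antisymm h1 h2 := Subtype.ext (B.le_antisymm h1 h2)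
  idH X := ⟨X.2.1, X.2.2, X.2.2⟩
  comp R S := ⟨B.comp R.1 S.1,
    by rw [← B.comp_assoc, R.2.1],
    by rw [B.comp_assoc, S.2.2]⟩
  comp_le h1 h2 := B.comp_le h1 h2
  id_comp R := Subtype.ext R.2.1
  comp_id R := Subtype.ext R.2.2
  comp_assoc f g h := Subtype.ext (B.comp_assoc f.1 g.1 h.1)

/-- The bicategory of monads and modules in a locally ordered bicategory. -/
def ModB (B : LoBicat) : LoBicat where
  Obj := Σ A : B.Obj, { a : B.Hom A A // B.le (B.idH A) a ∧ B.le (B.comp a a) a }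
  Hom X Y := { m : B.Hom X.1 Y.1 // B.le (B.comp X.2.1 m) m ∧ B.le (B.comp m Y.2.1) m }
  le m n := B.le m.1 n.1
  le_refl _ := B.le_refl _
  le_trans h1 h2 := B.le_trans h1 h2
  le_antisymm h1 h2 := Subtype.ext (B.le_antisymm h1 h2)
  idH X := ⟨X.2.1, X.2.2.2, X.2.2.2⟩
  comp m n := ⟨B.comp m.1 n.1,
    by rw [← B.comp_assoc]; exact B.comp_le m.2.1 (B.le_refl _),
    by rw [B.comp_assoc]; exact B.comp_le (B.le_refl _) n.2.2⟩
  comp_le h1 h2 := B.comp_le h1 h2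
  id_comp := by
    rintro X Y m
    refine Subtype.ext (B.le_antisymm m.2.1 ?_)
    have h := B.comp_le (f := B.idH X.1) (f' := X.2.1) X.2.2.1 (B.le_refl m.1)
    rwa [B.id_comp] at h
  comp_id := by
    rintro X Y m
    refine Subtype.ext (B.le_antisymm m.2.2 ?_)
    have h := B.comp_le (g := B.idH Y.1) (g' := Y.2.1) (B.le_refl m.1) Y.2.2.1
    rwa [B.comp_id] at h
  comp_assoc f g h := Subtype.ext (B.comp_assoc f.1 g.1 h.1)

/-- A pseudofunctor between locally ordered bicategories (necessarily strict,
since invertible 2-cells in a poset are equalities). -/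
structure LoFunctor (B D : LoBicat) where
  obj : B.Obj → D.Obj
  map : ∀ {A X : B.Obj}, B.Hom A X → D.Hom (obj A) (obj X)
  map_le : ∀ {A X : B.Obj} {f g : B.Hom A X}, B.le f g → D.le (map f) (map g)
  map_id : ∀ A : B.Obj, map (B.idH A) = D.idH (obj A)
  map_comp : ∀ {A X Y : B.Obj} (f : B.Hom A X) (g : B.Hom X Y),
      map (B.comp f g) = D.comp (map f) (map g)

/-- Equivalence of two objects inside a locally ordered bicategory. -/
def EquivOb (D : LoBicat) (X Y : D.Obj) : Prop :=
  ∃ (u : D.Hom X Y) (v : D.Hom Y X), D.comp u v = D.idH X ∧ D.comp v u = D.idH Y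

/-- A biequivalence of locally ordered bicategories: biessentially surjective
and a local order-isomorphism (fully faithful on hom-posets). -/
def IsBiequiv {B D : LoBicat} (F : LoFunctor B D) : Prop :=
  (∀ Y : D.Obj, ∃ X : B.Obj, EquivOb D (F.obj X) Y) ∧
  (∀ {A X : B.Obj} (f g : B.Hom A X), D.le (F.map f) (F.map g) → B.le f g) ∧
  (∀ {A X : B.Obj} (h : D.Hom (F.obj A) (F.obj X)), ∃ f : B.Hom A X, F.map f = h)

/-- The product of two locally ordered bicategories, formed componentwise. -/
def prodLo (B D : LoBicat) : LoBicat where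
  Obj := B.Obj × D.Obj
  Hom X Y := B.Hom X.1 Y.1 × D.Hom X.2 Y.2
  le f g := B.le f.1 g.1 ∧ D.le f.2 g.2
  le_refl f := ⟨B.le_refl _, D.le_refl _⟩
  le_trans h1 h2 := ⟨B.le_trans h1.1 h2.1, D.le_trans h1.2 h2.2⟩
  le_antisymm h1 h2 := Prod.ext (B.le_antisymm h1.1 h2.1) (D.le_antisymm h1.2 h2.2)
  idH X := (B.idH X.1, D.idH X.2)
  comp f g := (B.comp f.1 g.1, D.comp f.2 g.2)
  comp_le h1 h2 := ⟨B.comp_le h1.1 h2.1, D.comp_le h1.2 h2.2⟩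
  id_comp f := Prod.ext (B.id_comp f.1) (D.id_comp f.2)
  comp_id f := Prod.ext (B.comp_id f.1) (D.comp_id f.2)
  comp_assoc f g h := Prod.ext (B.comp_assoc f.1 g.1 h.1) (D.comp_assoc f.2 g.2 h.2)

/-- The canonical functor `Kar (B × D) → Kar B × Kar D` induced by the pair
of projections. -/
def karProj (B D : LoBicat) : LoFunctor (Kar (prodLo B D)) (prodLo (Kar B) (Kar D)) where
  obj X := (⟨X.1.1, ⟨X.2.1.1, congrArg Prod.fst X.2.2⟩⟩,
            ⟨X.1.2, ⟨X.2.1.2, congrArg Prod.snd X.2.2⟩⟩)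
  map R := (⟨R.1.1, congrArg Prod.fst R.2.1, congrArg Prod.fst R.2.2⟩,
            ⟨R.1.2, congrArg Prod.snd R.2.1, congrArg Prod.snd R.2.2⟩)
  map_le h := h
  map_id _ := rfl
  map_comp _ _ := rfl

end LoBicat

open LoBicat

namespace ModCartAux

variable {B : LoBicat}

theorem idem (X : (ModB B).Obj) : B.comp X.2.1 X.2.1 = X.2.1 :=
  B.le_antisymm X.2.2.2 (by
    have h := B.comp_le X.2.2.1 (B.le_refl X.2.1)
    rwa [B.id_comp] at h)

theorem modl {X Y : (ModB B).Obj} (m : (ModB B).Hom X Y) :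
    B.comp X.2.1 m.1 = m.1 :=
  B.le_antisymm m.2.1 (by
    have h := B.comp_le X.2.2.1 (B.le_refl m.1)
    rwa [B.id_comp] at h)

theorem modr {X Y : (ModB B).Obj} (m : (ModB B).Hom X Y) :
    B.comp m.1 Y.2.1 = m.1 :=
  B.le_antisymm m.2.2 (by
    have h := B.comp_le (B.le_refl m.1) Y.2.2.1
    rwa [B.comp_id] at h)

def mk (X Y : (ModB B).Obj) (f : B.Hom X.1 Y.1)
    (h : B.comp X.2.1 f = B.comp f Y.2.1) : (ModB B).Hom X Y :=
  ⟨B.comp X.2.1 f,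
    by rw [← B.comp_assoc, idem]; exact B.le_refl _,
    by rw [B.comp_assoc, ← h, ← B.comp_assoc, idem]; exact B.le_refl _⟩

theorem mk_comp {X Y Z : (ModB B).Obj} {f : B.Hom X.1 Y.1} {g : B.Hom Y.1 Z.1}
    {hf : B.comp X.2.1 f = B.comp f Y.2.1} {hg : B.comp Y.2.1 g = B.comp g Z.2.1} :
    (ModB B).comp (mk X Y f hf) (mk Y Z g hg)
      = mk X Z (B.comp f g)
        (by rw [← B.comp_assoc, hf, B.comp_assoc, hg, ← B.comp_assoc]) := by
  apply Subtype.ext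
  show B.comp (B.comp X.2.1 f) (B.comp Y.2.1 g) = B.comp X.2.1 (B.comp f g)
  calc B.comp (B.comp X.2.1 f) (B.comp Y.2.1 g)
      = B.comp (B.comp (B.comp X.2.1 f) Y.2.1) g := (B.comp_assoc _ _ _).symm
    _ = B.comp (B.comp X.2.1 (B.comp f Y.2.1)) g := by
        rw [B.comp_assoc X.2.1 f Y.2.1]
    _ = B.comp (B.comp X.2.1 (B.comp X.2.1 f)) g := by rw [← hf]
    _ = B.comp (B.comp (B.comp X.2.1 X.2.1) f) g := by
        rw [B.comp_assoc X.2.1 X.2.1 f]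
    _ = B.comp (B.comp X.2.1 f) g := by rw [idem]
    _ = B.comp X.2.1 (B.comp f g) := B.comp_assoc _ _ _

theorem mk_idH (X : (ModB B).Obj) :
    (ModB B).idH X = mk X X (B.idH X.1) (by rw [B.comp_id, B.id_comp]) :=
  Subtype.ext (B.comp_id _).symm

theorem mk_congr {X Y : (ModB B).Obj} {f g : B.Hom X.1 Y.1}
    {hf : B.comp X.2.1 f = B.comp f Y.2.1} {hg : B.comp X.2.1 g = B.comp g Y.2.1}
    (e : f = g) : mk X Y f hf = mk X Y g hg := by
  subst e; rfl

theorem mk_eq {X Y : (ModB B).Obj} {f g : B.Hom X.1 Y.1}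
    {hf : B.comp X.2.1 f = B.comp f Y.2.1} {hg : B.comp X.2.1 g = B.comp g Y.2.1}
    (e : B.comp X.2.1 f = B.comp X.2.1 g) : mk X Y f hf = mk X Y g hg :=
  Subtype.ext e

section
variable (hB : B.CartStr)

def tensOb (X Y : (ModB B).Obj) : (ModB B).Obj :=
  ⟨hB.tens X.1 Y.1, hB.tensH X.2.1 Y.2.1,
    by rw [← hB.tensH_id]; exact hB.tensH_le X.2.2.1 Y.2.2.1,
    by rw [← hB.tensH_comp, idem, idem]; exact B.le_refl _⟩

def tensHom {X X' Y Y' : (ModB B).Obj} (m : (ModB B).Hom X Y)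
    (n : (ModB B).Hom X' Y') : (ModB B).Hom (tensOb hB X X') (tensOb hB Y Y') :=
  ⟨hB.tensH m.1 n.1,
    by have h := hB.tensH_le m.2.1 n.2.1; rwa [hB.tensH_comp] at h,
    by have h := hB.tensH_le m.2.2 n.2.2; rwa [hB.tensH_comp] at h⟩

def IOb : (ModB B).Obj :=
  ⟨hB.I, B.idH hB.I, B.le_refl _, by rw [B.id_comp]; exact B.le_refl _⟩

theorem mk_tens {X X' Y Y' : (ModB B).Obj} {f : B.Hom X.1 Y.1} {g : B.Hom X'.1 Y'.1}
    {hf : B.comp X.2.1 f = B.comp f Y.2.1} {hg : B.comp X'.2.1 g = B.comp g Y'.2.1} :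
    tensHom hB (mk X Y f hf) (mk X' Y' g hg)
      = mk (tensOb hB X X') (tensOb hB Y Y') (hB.tensH f g)
        (by show B.comp (hB.tensH X.2.1 X'.2.1) (hB.tensH f g)
              = B.comp (hB.tensH f g) (hB.tensH Y.2.1 Y'.2.1)
            rw [← hB.tensH_comp, hf, hg, hB.tensH_comp]) :=
  Subtype.ext (hB.tensH_comp X.2.1 f X'.2.1 g)

theorem rhoInv_nat {X Y : B.Obj} (f : B.Hom X Y) :
    B.comp (hB.tensH f (B.idH hB.I)) (hB.rhoInv Y) = B.comp (hB.rhoInv X) f := by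
  calc B.comp (hB.tensH f (B.idH hB.I)) (hB.rhoInv Y)
      = B.comp (B.comp (B.idH _) (hB.tensH f (B.idH hB.I))) (hB.rhoInv Y) := by
        rw [B.id_comp]
    _ = B.comp (B.comp (B.comp (hB.rhoInv X) (hB.rho X)) (hB.tensH f (B.idH hB.I)))
          (hB.rhoInv Y) := by rw [hB.rho_inv_right]
    _ = B.comp (hB.rhoInv X)
          (B.comp (B.comp (hB.rho X) (hB.tensH f (B.idH hB.I))) (hB.rhoInv Y)) := by
        rw [B.comp_assoc (hB.rhoInv X) (hB.rho X) (hB.tensH f (B.idH hB.I)),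
          B.comp_assoc]
    _ = B.comp (hB.rhoInv X) (B.comp (B.comp f (hB.rho Y)) (hB.rhoInv Y)) := by
        rw [← hB.rho_nat]
    _ = B.comp (hB.rhoInv X) (B.comp f (B.comp (hB.rho Y) (hB.rhoInv Y))) := by
        rw [B.comp_assoc]
    _ = B.comp (hB.rhoInv X) f := by rw [hB.rho_inv_left, B.comp_id]

theorem lamInv_nat {X Y : B.Obj} (f : B.Hom X Y) :
    B.comp (hB.tensH (B.idH hB.I) f) (hB.lamInv Y) = B.comp (hB.lamInv X) f := by
  calc B.comp (hB.tensH (B.idH hB.I) f) (hB.lamInv Y)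
      = B.comp (B.comp (B.idH _) (hB.tensH (B.idH hB.I) f)) (hB.lamInv Y) := by
        rw [B.id_comp]
    _ = B.comp (B.comp (B.comp (hB.lamInv X) (hB.lam X)) (hB.tensH (B.idH hB.I) f))
          (hB.lamInv Y) := by rw [hB.lam_inv_right]
    _ = B.comp (hB.lamInv X)
          (B.comp (B.comp (hB.lam X) (hB.tensH (B.idH hB.I) f)) (hB.lamInv Y)) := by
        rw [B.comp_assoc (hB.lamInv X) (hB.lam X) (hB.tensH (B.idH hB.I) f),
          B.comp_assoc]
    _ = B.comp (hB.lamInv X) (B.comp (B.comp f (hB.lam Y)) (hB.lamInv Y)) := by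
        rw [← hB.lam_nat]
    _ = B.comp (hB.lamInv X) (B.comp f (B.comp (hB.lam Y) (hB.lamInv Y))) := by
        rw [B.comp_assoc]
    _ = B.comp (hB.lamInv X) f := by rw [hB.lam_inv_left, B.comp_id]

theorem alpInv_nat {X Y Z X' Y' Z' : B.Obj} (f : B.Hom X X') (g : B.Hom Y Y')
    (h : B.Hom Z Z') :
    B.comp (hB.tensH f (hB.tensH g h)) (hB.alpInv X' Y' Z')
      = B.comp (hB.alpInv X Y Z) (hB.tensH (hB.tensH f g) h) := by
  calc B.comp (hB.tensH f (hB.tensH g h)) (hB.alpInv X' Y' Z')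
      = B.comp (B.comp (B.idH _) (hB.tensH f (hB.tensH g h))) (hB.alpInv X' Y' Z') := by
        rw [B.id_comp]
    _ = B.comp (B.comp (B.comp (hB.alpInv X Y Z) (hB.alp X Y Z))
          (hB.tensH f (hB.tensH g h))) (hB.alpInv X' Y' Z') := by
        rw [hB.alp_inv_right]
    _ = B.comp (hB.alpInv X Y Z)
          (B.comp (B.comp (hB.alp X Y Z) (hB.tensH f (hB.tensH g h)))
            (hB.alpInv X' Y' Z')) := by
        rw [B.comp_assoc (hB.alpInv X Y Z) (hB.alp X Y Z)
          (hB.tensH f (hB.tensH g h)), B.comp_assoc]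
    _ = B.comp (hB.alpInv X Y Z)
          (B.comp (B.comp (hB.tensH (hB.tensH f g) h) (hB.alp X' Y' Z'))
            (hB.alpInv X' Y' Z')) := by rw [← hB.alp_nat]
    _ = B.comp (hB.alpInv X Y Z)
          (B.comp (hB.tensH (hB.tensH f g) h)
            (B.comp (hB.alp X' Y' Z') (hB.alpInv X' Y' Z'))) := by
        rw [B.comp_assoc]
    _ = B.comp (hB.alpInv X Y Z) (hB.tensH (hB.tensH f g) h) := by
        rw [hB.alp_inv_left, B.comp_id]

def rhoM (X : (ModB B).Obj) : (ModB B).Hom X (tensOb hB X (IOb hB)) :=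
  mk X _ (hB.rho X.1) (hB.rho_nat X.2.1)

def rhoInvM (X : (ModB B).Obj) : (ModB B).Hom (tensOb hB X (IOb hB)) X :=
  mk _ X (hB.rhoInv X.1) (rhoInv_nat hB X.2.1)

def lamM (X : (ModB B).Obj) : (ModB B).Hom X (tensOb hB (IOb hB) X) :=
  mk X _ (hB.lam X.1) (hB.lam_nat X.2.1)

def lamInvM (X : (ModB B).Obj) : (ModB B).Hom (tensOb hB (IOb hB) X) X :=
  mk _ X (hB.lamInv X.1) (lamInv_nat hB X.2.1)

def gamM (X Y : (ModB B).Obj) :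
    (ModB B).Hom (tensOb hB X Y) (tensOb hB Y X) :=
  mk _ _ (hB.gam X.1 Y.1) (hB.gam_nat X.2.1 Y.2.1)

def alpM (X Y Z : (ModB B).Obj) :
    (ModB B).Hom (tensOb hB (tensOb hB X Y) Z) (tensOb hB X (tensOb hB Y Z)) :=
  mk _ _ (hB.alp X.1 Y.1 Z.1) (hB.alp_nat X.2.1 Y.2.1 Z.2.1)

def alpInvM (X Y Z : (ModB B).Obj) :
    (ModB B).Hom (tensOb hB X (tensOb hB Y Z)) (tensOb hB (tensOb hB X Y) Z) :=
  mk _ _ (hB.alpInv X.1 Y.1 Z.1) (alpInv_nat hB X.2.1 Y.2.1 Z.2.1)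

theorem a_t (X : (ModB B).Obj) : B.comp X.2.1 (hB.t X.1) = hB.t X.1 :=
  B.le_antisymm (hB.colax_t X.2.1) (by
    have h := B.comp_le X.2.2.1 (B.le_refl (hB.t X.1))
    rwa [B.id_comp] at h)

def Dsat (X : (ModB B).Obj) : B.Hom X.1 (hB.tens X.1 X.1) :=
  B.comp (hB.d X.1) (hB.tensH X.2.1 X.2.1)

theorem TaaTaa (X : (ModB B).Obj) :
    B.comp (hB.tensH X.2.1 X.2.1) (hB.tensH X.2.1 X.2.1) = hB.tensH X.2.1 X.2.1 := by
  rw [← hB.tensH_comp, idem]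

theorem D_aa (X : (ModB B).Obj) :
    B.comp (Dsat hB X) (hB.tensH X.2.1 X.2.1) = Dsat hB X := by
  show B.comp (B.comp (hB.d X.1) (hB.tensH X.2.1 X.2.1)) (hB.tensH X.2.1 X.2.1)
      = B.comp (hB.d X.1) (hB.tensH X.2.1 X.2.1)
  rw [B.comp_assoc, TaaTaa]

theorem a_D (X : (ModB B).Obj) :
    B.comp X.2.1 (Dsat hB X) = Dsat hB X := by
  apply B.le_antisymm
  · have h1 := B.comp_le (hB.colax_d X.2.1) (B.le_refl (hB.tensH X.2.1 X.2.1))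
    have e1 : B.comp X.2.1 (Dsat hB X)
        = B.comp (B.comp X.2.1 (hB.d X.1)) (hB.tensH X.2.1 X.2.1) :=
      (B.comp_assoc _ _ _).symm
    rw [e1]
    have e2 : B.comp (B.comp (hB.d X.1) (hB.tensH X.2.1 X.2.1)) (hB.tensH X.2.1 X.2.1)
        = Dsat hB X := D_aa hB X
    rw [← e2]
    exact h1
  · have h := B.comp_le X.2.2.1 (B.le_refl (Dsat hB X))
    rwa [B.id_comp] at h

def dM (X : (ModB B).Obj) : (ModB B).Hom X (tensOb hB X X) :=
  mk X _ (Dsat hB X) (by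
    show B.comp X.2.1 (Dsat hB X) = B.comp (Dsat hB X) (hB.tensH X.2.1 X.2.1)
    rw [a_D, D_aa])

def tM (X : (ModB B).Obj) : (ModB B).Hom X (IOb hB) :=
  mk X _ (hB.t X.1) (by
    show B.comp X.2.1 (hB.t X.1) = B.comp (hB.t X.1) (B.idH hB.I)
    rw [a_t, B.comp_id])

theorem Dcoassoc (X : (ModB B).Obj) :
    B.comp (B.comp (Dsat hB X) (hB.tensH (Dsat hB X) (B.idH X.1))) (hB.alp X.1 X.1 X.1)
      = B.comp (Dsat hB X) (hB.tensH (B.idH X.1) (Dsat hB X)) := by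
  have hTDa : hB.tensH (Dsat hB X) X.2.1
      = B.comp (hB.tensH (hB.d X.1) (B.idH X.1))
          (hB.tensH (hB.tensH X.2.1 X.2.1) X.2.1) := by
    have h := hB.tensH_comp (hB.d X.1) (hB.tensH X.2.1 X.2.1) (B.idH X.1) X.2.1
    rw [B.id_comp] at h
    exact h
  have hstep1 : B.comp (Dsat hB X) (hB.tensH (Dsat hB X) (B.idH X.1))
      = B.comp (hB.d X.1) (hB.tensH (Dsat hB X) X.2.1) := by
    show B.comp (B.comp (hB.d X.1) (hB.tensH X.2.1 X.2.1))
        (hB.tensH (Dsat hB X) (B.idH X.1)) = _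
    rw [B.comp_assoc]
    congr 1
    have h := hB.tensH_comp X.2.1 (Dsat hB X) X.2.1 (B.idH X.1)
    rw [a_D, B.comp_id] at h
    exact h.symm
  have haD : B.comp (hB.tensH (B.idH X.1) (hB.d X.1))
        (hB.tensH X.2.1 (hB.tensH X.2.1 X.2.1)) = hB.tensH X.2.1 (Dsat hB X) := by
    have h := hB.tensH_comp (B.idH X.1) X.2.1 (hB.d X.1) (hB.tensH X.2.1 X.2.1)
    rw [B.id_comp] at h
    exact h.symm
  calc B.comp (B.comp (Dsat hB X) (hB.tensH (Dsat hB X) (B.idH X.1))) (hB.alp X.1 X.1 X.1)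
      = B.comp (B.comp (hB.d X.1) (hB.tensH (Dsat hB X) X.2.1)) (hB.alp X.1 X.1 X.1) := by
        rw [hstep1]
    _ = B.comp (hB.d X.1) (B.comp (B.comp (hB.tensH (hB.d X.1) (B.idH X.1))
          (hB.tensH (hB.tensH X.2.1 X.2.1) X.2.1)) (hB.alp X.1 X.1 X.1)) := by
        rw [hTDa, B.comp_assoc]
    _ = B.comp (hB.d X.1) (B.comp (hB.tensH (hB.d X.1) (B.idH X.1))
          (B.comp (hB.alp X.1 X.1 X.1) (hB.tensH X.2.1 (hB.tensH X.2.1 X.2.1)))) := by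
        rw [B.comp_assoc, hB.alp_nat]
    _ = B.comp (B.comp (B.comp (hB.d X.1) (hB.tensH (hB.d X.1) (B.idH X.1)))
          (hB.alp X.1 X.1 X.1)) (hB.tensH X.2.1 (hB.tensH X.2.1 X.2.1)) := by
        rw [← B.comp_assoc (hB.tensH (hB.d X.1) (B.idH X.1)) (hB.alp X.1 X.1 X.1)
            (hB.tensH X.2.1 (hB.tensH X.2.1 X.2.1)),
          ← B.comp_assoc (hB.d X.1)
            (B.comp (hB.tensH (hB.d X.1) (B.idH X.1)) (hB.alp X.1 X.1 X.1))
            (hB.tensH X.2.1 (hB.tensH X.2.1 X.2.1)),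
          ← B.comp_assoc (hB.d X.1) (hB.tensH (hB.d X.1) (B.idH X.1)) (hB.alp X.1 X.1 X.1)]
    _ = B.comp (B.comp (hB.d X.1) (hB.tensH (B.idH X.1) (hB.d X.1)))
          (hB.tensH X.2.1 (hB.tensH X.2.1 X.2.1)) := by
        rw [hB.coassoc]
    _ = B.comp (hB.d X.1) (hB.tensH X.2.1 (Dsat hB X)) := by
        rw [B.comp_assoc, haD]
    _ = B.comp (Dsat hB X) (hB.tensH (B.idH X.1) (Dsat hB X)) := by
        show _ = B.comp (B.comp (hB.d X.1) (hB.tensH X.2.1 X.2.1))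
          (hB.tensH (B.idH X.1) (Dsat hB X))
        rw [B.comp_assoc]
        congr 1
        have h := hB.tensH_comp X.2.1 (B.idH X.1) X.2.1 (Dsat hB X)
        rw [B.comp_id, a_D] at h
        exact h

theorem D_counit_rho (X : (ModB B).Obj) :
    B.comp (Dsat hB X) (hB.tensH (B.idH X.1) (hB.t X.1))
      = B.comp X.2.1 (hB.rho X.1) := by
  have h1 : B.comp (hB.tensH X.2.1 X.2.1) (hB.tensH (B.idH X.1) (hB.t X.1))
      = hB.tensH X.2.1 (hB.t X.1) := by
    rw [← hB.tensH_comp, B.comp_id, a_t]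
  have h2 : hB.tensH X.2.1 (hB.t X.1)
      = B.comp (hB.tensH (B.idH X.1) (hB.t X.1)) (hB.tensH X.2.1 (B.idH hB.I)) := by
    rw [← hB.tensH_comp, B.id_comp, B.comp_id]
  calc B.comp (Dsat hB X) (hB.tensH (B.idH X.1) (hB.t X.1))
      = B.comp (hB.d X.1) (hB.tensH X.2.1 (hB.t X.1)) := by
        show B.comp (B.comp (hB.d X.1) (hB.tensH X.2.1 X.2.1)) _ = _
        rw [B.comp_assoc, h1]
    _ = B.comp (B.comp (hB.d X.1) (hB.tensH (B.idH X.1) (hB.t X.1)))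
          (hB.tensH X.2.1 (B.idH hB.I)) := by rw [h2, B.comp_assoc]
    _ = B.comp (hB.rho X.1) (hB.tensH X.2.1 (B.idH hB.I)) := by rw [hB.counit_rho]
    _ = B.comp X.2.1 (hB.rho X.1) := (hB.rho_nat X.2.1).symm

theorem D_counit_lam (X : (ModB B).Obj) :
    B.comp (Dsat hB X) (hB.tensH (hB.t X.1) (B.idH X.1))
      = B.comp X.2.1 (hB.lam X.1) := by
  have h1 : B.comp (hB.tensH X.2.1 X.2.1) (hB.tensH (hB.t X.1) (B.idH X.1))
      = hB.tensH (hB.t X.1) X.2.1 := by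
    rw [← hB.tensH_comp, B.comp_id, a_t]
  have h2 : hB.tensH (hB.t X.1) X.2.1
      = B.comp (hB.tensH (hB.t X.1) (B.idH X.1)) (hB.tensH (B.idH hB.I) X.2.1) := by
    rw [← hB.tensH_comp, B.id_comp, B.comp_id]
  calc B.comp (Dsat hB X) (hB.tensH (hB.t X.1) (B.idH X.1))
      = B.comp (hB.d X.1) (hB.tensH (hB.t X.1) X.2.1) := by
        show B.comp (B.comp (hB.d X.1) (hB.tensH X.2.1 X.2.1)) _ = _
        rw [B.comp_assoc, h1]
    _ = B.comp (B.comp (hB.d X.1) (hB.tensH (hB.t X.1) (B.idH X.1)))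
          (hB.tensH (B.idH hB.I) X.2.1) := by rw [h2, B.comp_assoc]
    _ = B.comp (hB.lam X.1) (hB.tensH (B.idH hB.I) X.2.1) := by rw [hB.counit_lam]
    _ = B.comp X.2.1 (hB.lam X.1) := (hB.lam_nat X.2.1).symm

theorem Dcocomm (X : (ModB B).Obj) :
    B.comp (Dsat hB X) (hB.gam X.1 X.1) = Dsat hB X := by
  show B.comp (B.comp (hB.d X.1) (hB.tensH X.2.1 X.2.1)) (hB.gam X.1 X.1)
      = B.comp (hB.d X.1) (hB.tensH X.2.1 X.2.1)
  rw [B.comp_assoc, hB.gam_nat, ← B.comp_assoc, hB.cocomm]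

end

end ModCartAux
namespace ModCartAux

variable {B : LoBicat} (hB : B.CartStr)

def modCart : (ModB B).CartStr where
  tens := tensOb hB
  tensH := tensHom hB
  tensH_le h1 h2 := hB.tensH_le h1 h2
  tensH_id _ _ := Subtype.ext rfl
  tensH_comp f₁ f₂ g₁ g₂ := Subtype.ext (hB.tensH_comp f₁.1 f₂.1 g₁.1 g₂.1)
  I := IOb hB
  rho := rhoM hB
  rhoInv := rhoInvM hB
  rho_inv_left X := by
    simp only [rhoM, rhoInvM, mk_idH]
    repeat (first | erw [mk_tens] | erw [mk_comp])
    exact mk_congr (hB.rho_inv_left X.1)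
  rho_inv_right X := by
    simp only [rhoM, rhoInvM, mk_idH]
    repeat (first | erw [mk_tens] | erw [mk_comp])
    exact mk_congr (hB.rho_inv_right X.1)
  rho_nat {X Y} f := by
    apply Subtype.ext
    show B.comp f.1 (B.comp Y.2.1 (hB.rho Y.1))
        = B.comp (B.comp X.2.1 (hB.rho X.1)) (hB.tensH f.1 (B.idH hB.I))
    rw [← B.comp_assoc, modr f, B.comp_assoc, ← hB.rho_nat f.1, ← B.comp_assoc,
      modl f]
  lam := lamM hB
  lamInv := lamInvM hB
  lam_inv_left X := by
    simp only [lamM, lamInvM, mk_idH]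
    repeat (first | erw [mk_tens] | erw [mk_comp])
    exact mk_congr (hB.lam_inv_left X.1)
  lam_inv_right X := by
    simp only [lamM, lamInvM, mk_idH]
    repeat (first | erw [mk_tens] | erw [mk_comp])
    exact mk_congr (hB.lam_inv_right X.1)
  lam_nat {X Y} f := by
    apply Subtype.ext
    show B.comp f.1 (B.comp Y.2.1 (hB.lam Y.1))
        = B.comp (B.comp X.2.1 (hB.lam X.1)) (hB.tensH (B.idH hB.I) f.1)
    rw [← B.comp_assoc, modr f, B.comp_assoc, ← hB.lam_nat f.1, ← B.comp_assoc,
      modl f]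
  gam := gamM hB
  gam_nat {X Y X' Y'} f g := by
    apply Subtype.ext
    show B.comp (hB.tensH f.1 g.1)
          (B.comp (hB.tensH X'.2.1 Y'.2.1) (hB.gam X'.1 Y'.1))
        = B.comp (B.comp (hB.tensH X.2.1 Y.2.1) (hB.gam X.1 Y.1))
          (hB.tensH g.1 f.1)
    rw [← B.comp_assoc, ← hB.tensH_comp, modr f, modr g, hB.gam_nat f.1 g.1,
      B.comp_assoc, ← hB.gam_nat f.1 g.1, ← B.comp_assoc, ← hB.tensH_comp,
      modl f, modl g]
  alp := alpM hB
  alpInv := alpInvM hB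
  alp_inv_left X Y Z := by
    simp only [alpM, alpInvM, mk_idH]
    repeat (first | erw [mk_tens] | erw [mk_comp])
    exact mk_congr (hB.alp_inv_left X.1 Y.1 Z.1)
  alp_inv_right X Y Z := by
    simp only [alpM, alpInvM, mk_idH]
    repeat (first | erw [mk_tens] | erw [mk_comp])
    exact mk_congr (hB.alp_inv_right X.1 Y.1 Z.1)
  alp_nat {X Y Z X' Y' Z'} f g h := by
    apply Subtype.ext
    show B.comp (hB.tensH (hB.tensH f.1 g.1) h.1)
          (B.comp (hB.tensH (hB.tensH X'.2.1 Y'.2.1) Z'.2.1) (hB.alp X'.1 Y'.1 Z'.1))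
        = B.comp (B.comp (hB.tensH (hB.tensH X.2.1 Y.2.1) Z.2.1) (hB.alp X.1 Y.1 Z.1))
          (hB.tensH f.1 (hB.tensH g.1 h.1))
    rw [← B.comp_assoc, ← hB.tensH_comp, ← hB.tensH_comp, modr f, modr g, modr h,
      hB.alp_nat f.1 g.1 h.1, B.comp_assoc, ← hB.alp_nat f.1 g.1 h.1,
      ← B.comp_assoc, ← hB.tensH_comp, ← hB.tensH_comp, modl f, modl g, modl h]
  pentagon X Y Z W := by
    simp only [alpM, mk_idH]
    repeat (first | erw [mk_tens] | erw [mk_comp])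
    exact mk_congr (hB.pentagon X.1 Y.1 Z.1 W.1)
  triangle X Y := by
    simp only [rhoM, lamM, alpM, mk_idH]
    repeat (first | erw [mk_tens] | erw [mk_comp])
    exact mk_congr (hB.triangle X.1 Y.1)
  hexagon X Y Z := by
    simp only [gamM, alpM, mk_idH]
    repeat (first | erw [mk_tens] | erw [mk_comp])
    exact mk_congr (hB.hexagon X.1 Y.1 Z.1)
  symm X Y := by
    simp only [gamM, mk_idH]
    repeat (first | erw [mk_tens] | erw [mk_comp])
    exact mk_congr (hB.symm X.1 Y.1)
  d := dM hB
  t := tM hB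
  coassoc X := by
    simp only [dM, alpM, mk_idH]
    repeat (first | erw [mk_tens] | erw [mk_comp])
    exact mk_congr (Dcoassoc hB X)
  counit_rho X := by
    simp only [dM, tM, rhoM, mk_idH]
    repeat (first | erw [mk_tens] | erw [mk_comp])
    exact mk_eq (by erw [D_counit_rho hB X, ← B.comp_assoc, idem])
  counit_lam X := by
    simp only [dM, tM, lamM, mk_idH]
    repeat (first | erw [mk_tens] | erw [mk_comp])
    exact mk_eq (by erw [D_counit_lam hB X, ← B.comp_assoc, idem])
  cocomm X := by
    simp only [dM, gamM]
    repeat (first | erw [mk_tens] | erw [mk_comp])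
    exact mk_congr (Dcocomm hB X)
  colax_d {X Y} f := by
    show B.le (B.comp f.1 (B.comp Y.2.1 (Dsat hB Y)))
        (B.comp (B.comp X.2.1 (Dsat hB X)) (hB.tensH f.1 f.1))
    have eL : B.comp f.1 (B.comp Y.2.1 (Dsat hB Y))
        = B.comp (B.comp f.1 (hB.d Y.1)) (hB.tensH Y.2.1 Y.2.1) := by
      rw [← B.comp_assoc, modr f]
      show B.comp f.1 (B.comp (hB.d Y.1) (hB.tensH Y.2.1 Y.2.1)) = _
      rw [← B.comp_assoc]
    have eR : B.comp (B.comp X.2.1 (Dsat hB X)) (hB.tensH f.1 f.1)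
        = B.comp X.2.1 (B.comp (hB.d X.1) (hB.tensH f.1 f.1)) := by
      show B.comp (B.comp X.2.1 (B.comp (hB.d X.1) (hB.tensH X.2.1 X.2.1)))
          (hB.tensH f.1 f.1) = _
      rw [B.comp_assoc, B.comp_assoc, ← hB.tensH_comp, modl f]
    rw [eL, eR]
    have h1 := B.comp_le (hB.colax_d f.1) (B.le_refl (hB.tensH Y.2.1 Y.2.1))
    have e2 : B.comp (B.comp (hB.d X.1) (hB.tensH f.1 f.1)) (hB.tensH Y.2.1 Y.2.1)
        = B.comp (hB.d X.1) (hB.tensH f.1 f.1) := by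
      rw [B.comp_assoc, ← hB.tensH_comp, modr f]
    rw [e2] at h1
    refine B.le_trans h1 ?_
    have h2 := B.comp_le X.2.2.1 (B.le_refl (B.comp (hB.d X.1) (hB.tensH f.1 f.1)))
    rwa [B.id_comp] at h2
  colax_t {X Y} m := by
    show B.le (B.comp m.1 (B.comp Y.2.1 (hB.t Y.1))) (B.comp X.2.1 (hB.t X.1))
    rw [← B.comp_assoc, modr m]
    refine B.le_trans (hB.colax_t m.1) ?_
    have h := B.comp_le X.2.2.1 (B.le_refl (hB.t X.1))
    rwa [B.id_comp] at h
  d_map X := by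
    obtain ⟨ds, hu, hc⟩ := hB.d_map X.1
    refine ⟨⟨B.comp (hB.tensH X.2.1 X.2.1) (B.comp ds X.2.1), ?_, ?_⟩, ?_, ?_⟩
    · show B.le (B.comp (hB.tensH X.2.1 X.2.1)
          (B.comp (hB.tensH X.2.1 X.2.1) (B.comp ds X.2.1)))
        (B.comp (hB.tensH X.2.1 X.2.1) (B.comp ds X.2.1))
      rw [← B.comp_assoc, TaaTaa]; exact B.le_refl _
    · show B.le (B.comp (B.comp (hB.tensH X.2.1 X.2.1) (B.comp ds X.2.1)) X.2.1)
        (B.comp (hB.tensH X.2.1 X.2.1) (B.comp ds X.2.1))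
      rw [B.comp_assoc, B.comp_assoc, idem]; exact B.le_refl _
    · show B.le X.2.1 (B.comp (B.comp X.2.1 (Dsat hB X))
        (B.comp (hB.tensH X.2.1 X.2.1) (B.comp ds X.2.1)))
      have e : B.comp (B.comp X.2.1 (Dsat hB X))
            (B.comp (hB.tensH X.2.1 X.2.1) (B.comp ds X.2.1))
          = B.comp X.2.1 (B.comp (hB.d X.1)
            (B.comp (hB.tensH X.2.1 X.2.1) (B.comp ds X.2.1))) := by
        rw [B.comp_assoc]
        congr 1
        show B.comp (B.comp (hB.d X.1) (hB.tensH X.2.1 X.2.1))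
            (B.comp (hB.tensH X.2.1 X.2.1) (B.comp ds X.2.1)) = _
        rw [B.comp_assoc,
          ← B.comp_assoc (hB.tensH X.2.1 X.2.1) (hB.tensH X.2.1 X.2.1)
            (B.comp ds X.2.1), TaaTaa]
      rw [e]
      have u1 := B.comp_le hu (B.le_refl X.2.1)
      rw [B.id_comp] at u1
      have one_le_Taa : B.le (B.idH (hB.tens X.1 X.1)) (hB.tensH X.2.1 X.2.1) :=
        (tensOb hB X X).2.2.1
      have u3 := B.comp_le one_le_Taa (B.le_refl (B.comp ds X.2.1))
      rw [B.id_comp] at u3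
      have u4 := B.comp_le (B.le_refl (hB.d X.1)) u3
      have u5 : B.le X.2.1 (B.comp (hB.d X.1)
          (B.comp (hB.tensH X.2.1 X.2.1) (B.comp ds X.2.1))) := by
        refine B.le_trans ?_ u4
        rw [← B.comp_assoc]
        exact u1
      have u6 := B.comp_le (B.le_refl X.2.1) u5
      rwa [idem] at u6
    · show B.le (B.comp (B.comp (hB.tensH X.2.1 X.2.1) (B.comp ds X.2.1))
          (B.comp X.2.1 (Dsat hB X))) (hB.tensH X.2.1 X.2.1)
      have e : B.comp (B.comp (hB.tensH X.2.1 X.2.1) (B.comp ds X.2.1))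
            (B.comp X.2.1 (Dsat hB X))
          = B.comp (hB.tensH X.2.1 X.2.1) (B.comp ds
            (B.comp (B.comp X.2.1 (hB.d X.1)) (hB.tensH X.2.1 X.2.1))) := by
        rw [B.comp_assoc, B.comp_assoc]
        congr 2
        rw [← B.comp_assoc X.2.1 X.2.1 (Dsat hB X), idem]
        show B.comp X.2.1 (B.comp (hB.d X.1) (hB.tensH X.2.1 X.2.1)) = _
        rw [← B.comp_assoc]
      rw [e]
      have h1 := B.comp_le (hB.colax_d X.2.1) (B.le_refl (hB.tensH X.2.1 X.2.1))
      have e1 : B.comp (B.comp (hB.d X.1) (hB.tensH X.2.1 X.2.1))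
            (hB.tensH X.2.1 X.2.1)
          = B.comp (hB.d X.1) (hB.tensH X.2.1 X.2.1) := by
        rw [B.comp_assoc, TaaTaa]
      rw [e1] at h1
      have h2 := B.comp_le (B.le_refl ds) h1
      have h4 := B.comp_le hc (B.le_refl (hB.tensH X.2.1 X.2.1))
      rw [B.id_comp] at h4
      have h5 : B.le (B.comp ds (B.comp (B.comp X.2.1 (hB.d X.1))
          (hB.tensH X.2.1 X.2.1))) (hB.tensH X.2.1 X.2.1) := by
        refine B.le_trans h2 ?_
        rw [← B.comp_assoc]
        exact h4
      have h6 := B.comp_le (B.le_refl (hB.tensH X.2.1 X.2.1)) h5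
      rwa [TaaTaa] at h6
  t_map X := by
    obtain ⟨ts, hu, hc⟩ := hB.t_map X.1
    refine ⟨⟨B.comp ts X.2.1, ?_, ?_⟩, ?_, ?_⟩
    · show B.le (B.comp (B.idH hB.I) (B.comp ts X.2.1)) (B.comp ts X.2.1)
      rw [B.id_comp]; exact B.le_refl _
    · show B.le (B.comp (B.comp ts X.2.1) X.2.1) (B.comp ts X.2.1)
      rw [B.comp_assoc, idem]; exact B.le_refl _
    · show B.le X.2.1 (B.comp (B.comp X.2.1 (hB.t X.1)) (B.comp ts X.2.1))
      have u1 := B.comp_le hu (B.le_refl X.2.1)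
      rw [B.id_comp] at u1
      have u2 : B.le X.2.1 (B.comp (hB.t X.1) (B.comp ts X.2.1)) := by
        rw [← B.comp_assoc]; exact u1
      have u3 := B.comp_le (B.le_refl X.2.1) u2
      rw [idem] at u3
      rw [← B.comp_assoc] at u3
      exact u3
    · show B.le (B.comp (B.comp ts X.2.1) (B.comp X.2.1 (hB.t X.1))) (B.idH hB.I)
      have e : B.comp (B.comp ts X.2.1) (B.comp X.2.1 (hB.t X.1))
          = B.comp ts (hB.t X.1) := by
        rw [B.comp_assoc, ← B.comp_assoc X.2.1 X.2.1 (hB.t X.1), idem, a_t]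
      rw [e]
      exact hc

end ModCartAux

/-- STATEMENT 2: If `B` is a locally ordered Cartesian bicategory, then the
bicategory `Mod B` of monads and modules in `B` is a locally ordered Cartesian
bicategory too. -/
theorem statement2 (B : LoBicat) (hB : B.CartStr) : Nonempty (ModB B).CartStr :=
  ⟨ModCartAux.modCart hB⟩
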